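/- Let A = F_d* diag(â) F_d be a circular convolution operator on ℓ²(ℤ_d) with kernel a, let λ_1,…,λ_N be the distinct eigenvalues of A, and let P_k be the orthogonal projection onto the eigenspace E_k of diag(â) for λ_k. Let Ω ⊂ ℤ_d, set f_i = F_d e_i, and for each i ∈ Ω let r_i be the degree of the A-annihilator of e_i (the monic polynomial p of smallest degree with p(A)e_i = 0). If for every i ∈ Ω one has l_i ≥ r_i − 1 and for every k the family {P_k f_i : i ∈ Ω} is a frame for E_k, then Y = {e_i, A e_i, …, A^{l_i} e_i : i ∈ Ω} is a frame for ℓ²(ℤ_d). -/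

import Mathlib

open Matrix

/-- Unnormalized discrete Fourier transform of `a : ZMod d → ℂ`. -/
noncomputable def hatKer (d : ℕ) [NeZero d] (a : ZMod d → ℂ) : ZMod d → ℂ :=
  fun j => ∑ k : ZMod d,
    a k * Complex.exp (-(2 * (Real.pi : ℂ) * Complex.I) * ((j.val : ℂ) * (k.val : ℂ)) / (d : ℂ))

/-- The circular convolution operator with kernel `a`, as a matrix. -/
def convMat (d : ℕ) (a : ZMod d → ℂ) : Matrix (ZMod d) (ZMod d) ℂ :=
  Matrix.of fun k i => a (k - i)

/-- The normalized discrete Fourier matrix `F_d`. -/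
noncomputable def FdMat (d : ℕ) : Matrix (ZMod d) (ZMod d) ℂ :=
  Matrix.of fun j k =>
    ((Real.sqrt d : ℝ) : ℂ)⁻¹ *
      Complex.exp (-(2 * (Real.pi : ℂ) * Complex.I) * ((j.val : ℂ) * (k.val : ℂ)) / (d : ℂ))

/-- The degree of the `A`-annihilator of `v`: the smallest degree of a monic
polynomial `p` with `p(A) v = 0`. -/
noncomputable def annihDeg (d : ℕ) [NeZero d] (A : Matrix (ZMod d) (ZMod d) ℂ)
    (v : ZMod d → ℂ) : ℕ :=
  sInf {n : ℕ | ∃ p : Polynomial ℂ, p.Monic ∧ p.natDegree = n ∧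
    (Polynomial.aeval A p) *ᵥ v = 0}

section Helpers

open Polynomial

noncomputable def myZeta (d : ℕ) : ℂ :=
  Complex.exp (-(2 * (Real.pi : ℂ) * Complex.I) / d)

lemma myZeta_prim (d : ℕ) [NeZero d] : IsPrimitiveRoot (myZeta d) d := by
  have h := Complex.isPrimitiveRoot_exp d (NeZero.ne d)
  have : myZeta d = (Complex.exp (2 * Real.pi * Complex.I / d))⁻¹ := by
    rw [← Complex.exp_neg]; unfold myZeta; ring_nf
  rw [this]; exact h.inv

lemma myZeta_pow_d (d : ℕ) [NeZero d] : myZeta d ^ d = 1 := (myZeta_prim d).pow_eq_one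

lemma myZeta_pow_mod (d : ℕ) [NeZero d] (m : ℕ) : myZeta d ^ (m % d) = myZeta d ^ m := by
  conv_rhs => rw [← Nat.div_add_mod m d, pow_add, pow_mul, myZeta_pow_d, one_pow, one_mul]

lemma exp_eq_zeta (d : ℕ) [NeZero d] (j k : ZMod d) :
    Complex.exp (-(2 * (Real.pi : ℂ) * Complex.I) * ((j.val : ℂ) * (k.val : ℂ)) / (d : ℂ))
      = myZeta d ^ (j.val * k.val) := by
  rw [myZeta, ← Complex.exp_nat_mul]
  congr 1
  push_cast
  ring

lemma zeta_mul_add_right (d : ℕ) [NeZero d] (j k k' : ZMod d) :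
    myZeta d ^ (j.val * (k + k').val) = myZeta d ^ (j.val * k.val) * myZeta d ^ (j.val * k'.val) := by
  rw [← pow_add, ← myZeta_pow_mod d (j.val * (k + k').val),
      ← myZeta_pow_mod d (j.val * k.val + j.val * k'.val)]
  congr 1
  rw [ZMod.val_add, ← mul_add]
  exact Nat.ModEq.mul_left j.val (Nat.mod_modEq _ d)

lemma FA_eq_DF (d : ℕ) [NeZero d] (a : ZMod d → ℂ) :
    FdMat d * convMat d a = diagonal (hatKer d a) * FdMat d := by
  ext j i
  rw [mul_apply, diagonal_mul]
  have hL : ∀ k, FdMat d j k * convMat d a k i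
      = ((Real.sqrt d : ℝ) : ℂ)⁻¹ * myZeta d ^ (j.val * k.val) * a (k - i) := by
    intro k
    show ((Real.sqrt d : ℝ) : ℂ)⁻¹ * _ * a (k - i) = _
    rw [exp_eq_zeta]
  simp only [hL]
  rw [← Fintype.sum_equiv (Equiv.addRight i)
    (fun m => ((Real.sqrt d : ℝ) : ℂ)⁻¹ * myZeta d ^ (j.val * (m + i).val) * a m)
    (fun k => ((Real.sqrt d : ℝ) : ℂ)⁻¹ * myZeta d ^ (j.val * k.val) * a (k - i))
    (fun m => by simp)]
  have hR : FdMat d j i = ((Real.sqrt d : ℝ) : ℂ)⁻¹ * myZeta d ^ (j.val * i.val) := by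
    show ((Real.sqrt d : ℝ) : ℂ)⁻¹ * _ = _
    rw [exp_eq_zeta]
  rw [hR]
  have hk : hatKer d a j = ∑ m : ZMod d, a m * myZeta d ^ (j.val * m.val) :=
    Finset.sum_congr rfl (fun k _ => by rw [exp_eq_zeta d j k])
  rw [hk, Finset.sum_mul]
  refine Finset.sum_congr rfl fun m _ => ?_
  rw [zeta_mul_add_right]
  ring

lemma myZeta_ne_zero (d : ℕ) : myZeta d ≠ 0 := Complex.exp_ne_zero _

lemma conj_myZeta (d : ℕ) : (starRingEnd ℂ) (myZeta d) = (myZeta d)⁻¹ := by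
  rw [myZeta, ← Complex.exp_conj, ← Complex.exp_neg]
  congr 1
  simp only [map_neg, map_div₀, _root_.map_mul, Complex.conj_I, map_ofNat,
    Complex.conj_ofReal, map_natCast]
  ring

lemma sum_zmod_val (d : ℕ) [NeZero d] (f : ℕ → ℂ) :
    ∑ k : ZMod d, f k.val = ∑ n ∈ Finset.range d, f n := by
  refine Finset.sum_nbij' (fun k => k.val) (fun n => (n : ZMod d)) ?_ ?_ ?_ ?_ ?_
  · intro k _; exact Finset.mem_range.2 (ZMod.val_lt k)
  · intro n _; exact Finset.mem_univ _
  · intro k _; simp [ZMod.natCast_val, ZMod.cast_id]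
  · intro n hn; exact ZMod.val_cast_of_lt (Finset.mem_range.1 hn)
  · intro k _; rfl

lemma F_mul_conjT (d : ℕ) [NeZero d] : FdMat d * (FdMat d)ᴴ = 1 := by
  have hd0 : (d : ℝ) ≥ 0 := Nat.cast_nonneg d
  have hdne : (d : ℂ) ≠ 0 := Nat.cast_ne_zero.2 (NeZero.ne d)
  ext j j'
  rw [mul_apply, one_apply]
  have hterm : ∀ k : ZMod d, FdMat d j k * (FdMat d)ᴴ k j'
      = ((d : ℂ))⁻¹ * (myZeta d ^ j.val * ((myZeta d)⁻¹) ^ j'.val) ^ k.val := by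
    intro k
    rw [conjTranspose_apply]
    show (((Real.sqrt d : ℝ) : ℂ)⁻¹ * _) * (starRingEnd ℂ) (((Real.sqrt d : ℝ) : ℂ)⁻¹ * _) = _
    rw [exp_eq_zeta, exp_eq_zeta, _root_.map_mul, map_pow, conj_myZeta,
      ← Complex.ofReal_inv, Complex.conj_ofReal]
    have hsq : ((((Real.sqrt d)⁻¹ : ℝ)) : ℂ) * ((((Real.sqrt d)⁻¹ : ℝ)) : ℂ) = ((d : ℂ))⁻¹ := by
      rw [← Complex.ofReal_mul, ← mul_inv, Real.mul_self_sqrt hd0, Complex.ofReal_inv,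
        Complex.ofReal_natCast]
    rw [mul_pow, ← pow_mul, ← pow_mul, ← hsq]
    ring
  rw [Finset.sum_congr rfl fun k _ => hterm k, ← Finset.mul_sum]
  rw [sum_zmod_val d (fun n => (myZeta d ^ j.val * ((myZeta d)⁻¹) ^ j'.val) ^ n)]
  by_cases hjj : j = j'
  · subst hjj
    simp only [if_true]
    rw [show myZeta d ^ j.val * ((myZeta d)⁻¹) ^ j.val = 1 by
      rw [inv_pow, mul_inv_cancel₀ (pow_ne_zero _ (myZeta_ne_zero d))]]
    simp [Finset.sum_const, hdne]
  · rw [if_neg hjj]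
    have hw : myZeta d ^ j.val * ((myZeta d)⁻¹) ^ j'.val ≠ 1 := by
      intro h
      apply hjj
      have hz' : (myZeta d ^ j'.val) ≠ 0 := pow_ne_zero _ (myZeta_ne_zero d)
      rw [inv_pow] at h
      have : myZeta d ^ j.val = myZeta d ^ j'.val := by
        field_simp at h
        exact h
      exact ZMod.val_injective d ((myZeta_prim d).pow_inj (ZMod.val_lt j) (ZMod.val_lt j') this)
    rw [geom_sum_eq hw]
    have : (myZeta d ^ j.val * ((myZeta d)⁻¹) ^ j'.val) ^ d = 1 := by
      rw [mul_pow, ← pow_mul, ← pow_mul, mul_comm (j.val) d, mul_comm (j'.val) d,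
        pow_mul, pow_mul, (myZeta_prim d).pow_eq_one, inv_pow, (myZeta_prim d).pow_eq_one]
      simp
    rw [this]
    simp

lemma aeval_diagonal {d : ℕ} [NeZero d] (w : ZMod d → ℂ) (p : ℂ[X]) :
    aeval (diagonal w) p = diagonal fun s => p.eval (w s) := by
  induction p using Polynomial.induction_on' with
  | add p q hp hq =>
    rw [map_add, hp, hq, diagonal_add]
    simp only [eval_add]
  | monomial n c =>
    rw [aeval_monomial, algebraMap_eq_diagonal, diagonal_pow, diagonal_mul_diagonal]
    funext s
    simp [eval_monomial]

lemma F_mul_pow {d : ℕ} [NeZero d] (F A D : Matrix (ZMod d) (ZMod d) ℂ)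
    (h : F * A = D * F) (n : ℕ) : F * A ^ n = D ^ n * F := by
  induction n with
  | zero => simp
  | succ n ih =>
    rw [pow_succ, pow_succ, ← mul_assoc, ih, mul_assoc, h, ← mul_assoc]

lemma F_mul_aeval {d : ℕ} [NeZero d] (F A D : Matrix (ZMod d) (ZMod d) ℂ)
    (h : F * A = D * F) (p : ℂ[X]) : F * aeval A p = aeval D p * F := by
  induction p using Polynomial.induction_on' with
  | add p q hp hq => rw [map_add, map_add, mul_add, add_mul, hp, hq]
  | monomial n c =>
    rw [aeval_monomial, aeval_monomial, ← mul_assoc, mul_assoc _ _ (F : Matrix _ _ ℂ)]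
    rw [← F_mul_pow F A D h n, ← mul_assoc, ← Algebra.commutes c F]

lemma sum_mulVec {d : ℕ} [NeZero d] {ι : Type*} (s : Finset ι)
    (M : ι → Matrix (ZMod d) (ZMod d) ℂ) (v : ZMod d → ℂ) :
    (∑ i ∈ s, M i) *ᵥ v = ∑ i ∈ s, M i *ᵥ v := by
  induction s using Finset.cons_induction with
  | empty => simp [zero_mulVec]
  | cons i s hi ih => rw [Finset.sum_cons, Finset.sum_cons, add_mulVec, ih]

end Helpers

/-- if `l i ≥ r_i - 1`, where `r_i` is the degree of the `A`-annihilator of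
`e_i`, and for every eigenvalue `λ` of `diag(â)` the projections of the Fourier vectors
`f_i = F_d e_i` onto the eigenspace `E_λ = span{e_t : â t = λ}` span that eigenspace,
then `Y = {A^n e_i : i ∈ Ω, n ≤ l i}` is a frame for `ℓ²(ℤ_d)`. -/
theorem stmt1 (d : ℕ) [NeZero d] (a : ZMod d → ℂ) (Ω : Finset (ZMod d)) (l : ZMod d → ℕ)
    (hl : ∀ i ∈ Ω, annihDeg d (convMat d a) (Pi.single i 1) - 1 ≤ l i)
    (hproj : ∀ lam ∈ Set.range (hatKer d a),
      Submodule.span ℂ {v : ZMod d → ℂ | ∃ i ∈ Ω,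
          v = Set.indicator {t : ZMod d | hatKer d a t = lam}
                (FdMat d *ᵥ (Pi.single i 1 : ZMod d → ℂ))}
        = Submodule.span ℂ {v : ZMod d → ℂ | ∃ t : ZMod d,
            hatKer d a t = lam ∧ v = (Pi.single t 1 : ZMod d → ℂ)}) :
    Submodule.span ℂ {v : ZMod d → ℂ | ∃ i ∈ Ω, ∃ n ≤ l i,
        v = (convMat d a) ^ n *ᵥ (Pi.single i 1 : ZMod d → ℂ)} = ⊤ := by
  classical
  set A := convMat d a with hA
  set F := FdMat d with hFdef
  set w := hatKer d a with hw
  set D := diagonal w with hD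
  have hFA : F * A = D * F := FA_eq_DF d a
  set T : Set (ZMod d → ℂ) :=
    {v | ∃ i ∈ Ω, ∃ n ≤ l i, v = D ^ n *ᵥ (F *ᵥ Pi.single i 1)} with hT
  have hPmem : ∀ (lam : ℂ), ∀ i ∈ Ω,
      Set.indicator {t | w t = lam} (F *ᵥ Pi.single i 1) ∈ Submodule.span ℂ T := by
    intro lam i hi
    set g : ZMod d → ℂ := F *ᵥ Pi.single i 1 with hg
    by_cases hcase : ∀ s, w s = lam → g s = 0
    · have hzero : Set.indicator {t | w t = lam} g = 0 := by
        funext s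
        by_cases hs : w s = lam
        · rw [Set.indicator_of_mem (show s ∈ {t | w t = lam} from hs), hcase s hs]; rfl
        · rw [Set.indicator_of_notMem (show s ∉ {t | w t = lam} from hs)]; rfl
      rw [hzero]; exact Submodule.zero_mem _
    · push_neg at hcase
      obtain ⟨s₀, hs₀, hgs₀⟩ := hcase
      set Λ : Finset ℂ := (Finset.univ.filter fun s => g s ≠ 0).image w with hΛ
      have hmemΛ : ∀ s : ZMod d, g s ≠ 0 → w s ∈ Λ := fun s hs =>
        Finset.mem_image.2 ⟨s, Finset.mem_filter.2 ⟨Finset.mem_univ _, hs⟩, rfl⟩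
      have hlamΛ : lam ∈ Λ := hs₀ ▸ hmemΛ s₀ hgs₀
      have hkey : ∀ p : Polynomial ℂ, (Polynomial.aeval A p) *ᵥ (Pi.single i 1) = 0 →
          ∀ s, p.eval (w s) * g s = 0 := by
        intro p hp s
        have h1 : (Polynomial.aeval D p) *ᵥ g = 0 := by
          rw [hg, mulVec_mulVec, ← F_mul_aeval F A D hFA p, ← mulVec_mulVec, hp, mulVec_zero]
        have h2 := congrFun h1 s
        rw [hD, aeval_diagonal, mulVec_diagonal] at h2
        simpa using h2
      have hcard : Λ.card ≤ annihDeg d A (Pi.single i 1) := by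
        have hne : {n : ℕ | ∃ p : Polynomial ℂ, p.Monic ∧ p.natDegree = n ∧
            (Polynomial.aeval A p) *ᵥ (Pi.single i 1) = 0}.Nonempty := by
          refine ⟨A.charpoly.natDegree, A.charpoly, A.charpoly_monic, rfl, ?_⟩
          rw [Matrix.aeval_self_charpoly, zero_mulVec]
        obtain ⟨p₀, hmon, hdeg, hkill⟩ := Nat.sInf_mem hne
        have hvan : ∀ μ ∈ Λ, p₀.IsRoot μ := by
          intro μ hμ
          obtain ⟨s, hsmem, rfl⟩ := Finset.mem_image.1 hμ
          have hgs : g s ≠ 0 := (Finset.mem_filter.1 hsmem).2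
          exact (mul_eq_zero.1 (hkey p₀ hkill s)).resolve_right hgs
        have hp₀ : p₀ ≠ 0 := hmon.ne_zero
        calc Λ.card ≤ p₀.roots.toFinset.card :=
              Finset.card_le_card fun μ hμ => Multiset.mem_toFinset.2
                (Polynomial.mem_roots'.2 ⟨hp₀, hvan μ hμ⟩)
          _ ≤ Multiset.card p₀.roots := p₀.roots.toFinset_card_le
          _ ≤ p₀.natDegree := p₀.card_roots'
          _ = _ := hdeg
      have hΛl : Λ.card - 1 ≤ l i := le_trans (Nat.sub_le_sub_right hcard 1) (hl i hi)
      set p : Polynomial ℂ :=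
        ∏ μ ∈ Λ.erase lam, (Polynomial.C (lam - μ)⁻¹ * (Polynomial.X - Polynomial.C μ)) with hp
      have hdegp : p.natDegree ≤ l i := by
        have h1 : p.natDegree ≤ ∑ μ ∈ Λ.erase lam,
            (Polynomial.C (lam - μ)⁻¹ * (Polynomial.X - Polynomial.C μ)).natDegree :=
          Polynomial.natDegree_prod_le _ _
        have h2 : ∑ μ ∈ Λ.erase lam,
            (Polynomial.C (lam - μ)⁻¹ * (Polynomial.X - Polynomial.C μ)).natDegree
            ≤ (Λ.erase lam).card := by
          rw [Finset.card_eq_sum_ones]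
          refine Finset.sum_le_sum fun μ _ => ?_
          refine le_trans (Polynomial.natDegree_mul_le) ?_
          simp [Polynomial.natDegree_X_sub_C]
        have h3 : (Λ.erase lam).card = Λ.card - 1 := Finset.card_erase_of_mem hlamΛ
        exact le_trans (le_trans h1 (le_trans h2 (le_of_eq h3))) hΛl
      have hevlam : p.eval lam = 1 := by
        rw [hp, Polynomial.eval_prod]
        refine Finset.prod_eq_one fun μ hμ => ?_
        have hne : lam - μ ≠ 0 := sub_ne_zero.2 (Ne.symm (Finset.ne_of_mem_erase hμ))
        simp [inv_mul_cancel₀ hne]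
      have hevne : ∀ μ ∈ Λ, μ ≠ lam → p.eval μ = 0 := by
        intro μ hμ hne
        rw [hp, Polynomial.eval_prod]
        refine Finset.prod_eq_zero (Finset.mem_erase.2 ⟨hne, hμ⟩) ?_
        simp
      have hPg : (Polynomial.aeval D p) *ᵥ g = Set.indicator {t | w t = lam} g := by
        funext s
        rw [hD, aeval_diagonal, mulVec_diagonal]
        by_cases hgs : g s = 0
        · rw [hgs, mul_zero]
          by_cases hs : w s = lam
          · rw [Set.indicator_of_mem (show s ∈ {t | w t = lam} from hs), hgs]
          · rw [Set.indicator_of_notMem (show s ∉ {t | w t = lam} from hs)]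
        · by_cases hs : w s = lam
          · rw [Set.indicator_of_mem (show s ∈ {t | w t = lam} from hs), hs, hevlam, one_mul]
          · rw [Set.indicator_of_notMem (show s ∉ {t | w t = lam} from hs), hevne (w s) (hmemΛ s hgs) hs, zero_mul]
      rw [← hPg, Polynomial.aeval_eq_sum_range (R := ℂ) (p := p) D, _root_.sum_mulVec]
      refine Submodule.sum_mem _ fun n hn => ?_
      rw [smul_mulVec]
      refine Submodule.smul_mem _ _ (Submodule.subset_span ?_)
      exact ⟨i, hi, n, le_trans (Nat.lt_succ_iff.1 (Finset.mem_range.1 hn)) hdegp, rfl⟩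
  have hTtop : Submodule.span ℂ T = ⊤ := by
    rw [eq_top_iff]
    intro x _
    have hsingle : ∀ t : ZMod d, (Pi.single t 1 : ZMod d → ℂ) ∈ Submodule.span ℂ T := by
      intro t
      have hmem := hproj (w t) ⟨t, rfl⟩
      have het : (Pi.single t 1 : ZMod d → ℂ) ∈
          Submodule.span ℂ {v : ZMod d → ℂ | ∃ s, w s = w t ∧ v = Pi.single s 1} :=
        Submodule.subset_span ⟨t, rfl, rfl⟩
      rw [← hmem] at het
      refine Submodule.span_le.2 ?_ het
      rintro v ⟨i', hi', rfl⟩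
      exact hPmem (w t) i' hi'
    have hx : x = ∑ t : ZMod d, x t • (Pi.single t 1 : ZMod d → ℂ) := by
      funext s
      rw [Finset.sum_apply]
      simp [Pi.single_apply]
    rw [hx]
    exact Submodule.sum_mem _ fun t _ => Submodule.smul_mem _ _ (hsingle t)
  have hFinv : (FdMat d)ᴴ * F = 1 := (mul_eq_one_comm).1 (F_mul_conjT d)
  have hinj : Function.Injective fun v : ZMod d → ℂ => F *ᵥ v := by
    intro x y hxy
    have h3 : (FdMat d)ᴴ *ᵥ (F *ᵥ x) = (FdMat d)ᴴ *ᵥ (F *ᵥ y) := by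
      show (FdMat d)ᴴ *ᵥ ((fun v : ZMod d → ℂ => F *ᵥ v) x) = _
      rw [hxy]
    rwa [mulVec_mulVec, mulVec_mulVec, hFinv, one_mulVec, one_mulVec] at h3
  rw [eq_top_iff]
  intro x _
  have hximg : F *ᵥ x ∈ Submodule.span ℂ T := hTtop ▸ Submodule.mem_top
  have himg : T = (F.mulVecLin) '' {v : ZMod d → ℂ | ∃ i ∈ Ω, ∃ n ≤ l i,
      v = A ^ n *ᵥ (Pi.single i 1 : ZMod d → ℂ)} := by
    ext v
    constructor
    · rintro ⟨i, hi, n, hn, rfl⟩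
      exact ⟨A ^ n *ᵥ Pi.single i 1, ⟨i, hi, n, hn, rfl⟩, by
        rw [mulVecLin_apply, mulVec_mulVec, F_mul_pow F A D hFA n, ← mulVec_mulVec]⟩
    · rintro ⟨u, ⟨i, hi, n, hn, rfl⟩, rfl⟩
      exact ⟨i, hi, n, hn, by
        rw [mulVecLin_apply, mulVec_mulVec, F_mul_pow F A D hFA n, ← mulVec_mulVec]⟩
  rw [himg, Submodule.span_image] at hximg
  obtain ⟨y, hy, hyx⟩ := Submodule.mem_map.1 hximg
  have hxy : y = x := hinj (by simpa [mulVecLin_apply] using hyx)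
  exact hxy ▸ hy
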